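/- Define g₁(ζ) := 30 - αγ - (βγ - 20)·cos ζ + 24·sin ζ and g₂(ζ) := 48 + (α + β·cos ζ)² - 25·cos²ζ + 48·sin ζ, with α = 5/2 - 43/(2√41), β = 9/2 - 13/(2√41), γ = 2 + 28/√41. Then for all ζ ∈ [0, π]: g₂(ζ) ≥ 23 and g₁(ζ) ≥ g₁(0) = 50 - αγ - βγ > 33. -/

import Mathlib

noncomputable def α : ℝ := 5/2 - 43/(2*Real.sqrt 41)
noncomputable def β : ℝ := 9/2 - 13/(2*Real.sqrt 41)
noncomputable def γ : ℝ := 2 + 28/Real.sqrt 41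

noncomputable def g1 (ζ : ℝ) : ℝ :=
  30 - α*γ - (β*γ - 20)*Real.cos ζ + 24*Real.sin ζ

noncomputable def g2 (ζ : ℝ) : ℝ :=
  48 + (α + β*Real.cos ζ)^2 - 25*Real.cos ζ^2 + 48*Real.sin ζ

lemma sqrt41_pos : (0:ℝ) < Real.sqrt 41 := Real.sqrt_pos.mpr (by norm_num)

lemma sqrt41_sq : (Real.sqrt 41)^2 = 41 := Real.sq_sqrt (by norm_num)

lemma key1 : 0 < β*γ - 20 := by
  have hs := sqrt41_pos
  have hsq := sqrt41_sq
  have hne : Real.sqrt 41 ≠ 0 := ne_of_gt hs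
  have h1 : β*γ - 20 = 113/Real.sqrt 41 - 633/41 := by
    unfold β γ; field_simp; linear_combination 364 * hsq
  rw [h1, sub_pos, div_lt_div_iff₀ (by norm_num) hs]
  nlinarith [hsq, hs]

lemma key2 : (33 : ℝ) < 50 - α*γ - β*γ := by
  have hs := sqrt41_pos
  have hsq := sqrt41_sq
  have hne : Real.sqrt 41 ≠ 0 := ne_of_gt hs
  have h1 : (50:ℝ) - α*γ - β*γ = 36 + 784/41 - 140/Real.sqrt 41 := by
    unfold α β γ; field_simp; linear_combination (-1568) * hsq
  have h2 : 140/Real.sqrt 41 < 907/41 := by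
    rw [div_lt_div_iff₀ hs (by norm_num)]
    nlinarith [hsq, hs]
  rw [h1]; linarith

theorem stmt16 :
    (∀ ζ : ℝ, 0 ≤ ζ → ζ ≤ Real.pi → 23 ≤ g2 ζ) ∧
    (∀ ζ : ℝ, 0 ≤ ζ → ζ ≤ Real.pi → g1 0 ≤ g1 ζ) ∧
    g1 0 = 50 - α*γ - β*γ ∧ (33 : ℝ) < 50 - α*γ - β*γ := by
  refine ⟨?_, ?_, ?_, key2⟩
  · intro ζ h0 hπ
    have hsin := Real.sin_nonneg_of_nonneg_of_le_pi h0 hπ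
    have hcos : Real.cos ζ ^ 2 ≤ 1 := by
      nlinarith [Real.neg_one_le_cos ζ, Real.cos_le_one ζ]
    unfold g2
    nlinarith [sq_nonneg (α + β*Real.cos ζ)]
  · intro ζ h0 hπ
    have hsin := Real.sin_nonneg_of_nonneg_of_le_pi h0 hπ
    have hcos := Real.cos_le_one ζ
    have hk := key1
    unfold g1
    simp only [Real.cos_zero, Real.sin_zero]
    nlinarith
  · unfold g1
    simp only [Real.cos_zero, Real.sin_zero]
    ring
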